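/- Kernel estimate for L-semigroup derivatives of Gaussian-type functions: let G(y,x) = e^{s-σ} e^{|x|²/4} (4π(1-e^{-(s-σ)}))^{-N/2} exp(-|y e^{-(s-σ)/2} - x|²/(4(1-e^{-(s-σ)}))). Then for m = 0,1,2,3 there is C = C(N,m) with |∇ₓ^m G(y,x)| ≤ C e^{-m(s-σ)/2} (1 + |x| + |y|)^m e^{|x|²/4} e^{(s-σ)L}(y,x) for all y,x ∈ ℝ^N and s - σ ≥ 1. -/

import Mathlib

open MeasureTheory Real
open scoped BigOperators

section Aux

variable {E : Type*} [NormedAddCommGroup E] [InnerProductSpace ℝ E]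

lemma quadDeriv (s : ℝ) (v : E) (x : E) :
    HasFDerivAt (fun z : E => 1/4 * ‖z‖^2 - s * ‖v - z‖^2)
      ((1/2 - 2*s) • innerSL ℝ x + (2*s) • innerSL ℝ v) x := by
  have h1 := (HasFDerivAt.norm_sq (hasFDerivAt_id x)).const_mul (1/4 : ℝ)
  have h2 := (HasFDerivAt.norm_sq ((hasFDerivAt_const v x).sub (hasFDerivAt_id x))).const_mul s
  have h := h1.sub h2
  refine h.congr_fderiv ?_
  ext u
  simp [inner_sub_left, smul_smul, two_smul]
  ring

lemma quadContDiff (s : ℝ) (v : E) :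
    ContDiff ℝ ⊤ (fun z : E => 1/4 * ‖z‖^2 - s * ‖v - z‖^2) := by
  exact (contDiff_const.mul (contDiff_norm_sq ℝ)).sub
    (contDiff_const.mul ((contDiff_const.sub contDiff_id).norm_sq ℝ))

lemma quadFDeriv (s : ℝ) (v : E) :
    fderiv ℝ (fun z : E => 1/4 * ‖z‖^2 - s * ‖v - z‖^2)
      = fun x => (1/2 - 2*s) • innerSL ℝ x + (2*s) • innerSL ℝ v :=
  funext fun x => (quadDeriv s v x).fderiv

set_option synthInstance.maxHeartbeats 1000000 in
lemma quadFDeriv2 (s : ℝ) (v : E) :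
    fderiv ℝ (fun x : E => (1/2 - 2*s) • innerSL ℝ x + (2*s) • innerSL ℝ v)
      = fun _ => (1/2 - 2*s) • (innerSL ℝ (E := E)) := by
  funext x
  have : HasFDerivAt (fun x : E => (1/2 - 2*s) • innerSL ℝ x + (2*s) • innerSL ℝ v)
      ((1/2 - 2*s) • (innerSL ℝ (E := E))) x :=
    (((1/2 - 2*s) • (innerSL ℝ (E := E))).hasFDerivAt).add_const _
  exact this.fderiv

lemma quadD1 (s : ℝ) (v x : E) :
    ‖iteratedFDeriv ℝ 1 (fun z : E => 1/4 * ‖z‖^2 - s * ‖v - z‖^2) x‖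
      ≤ |1/2 - 2*s| * ‖x‖ + |2*s| * ‖v‖ := by
  have e1 : ‖iteratedFDeriv ℝ 1 (fun z : E => 1/4 * ‖z‖^2 - s * ‖v - z‖^2) x‖
      = ‖iteratedFDeriv ℝ 0 (fderiv ℝ (fun z : E => 1/4 * ‖z‖^2 - s * ‖v - z‖^2)) x‖ :=
    (norm_iteratedFDeriv_fderiv (n := 0)).symm
  rw [e1, norm_iteratedFDeriv_zero, quadFDeriv]
  refine le_trans (norm_add_le _ _) ?_
  simp [norm_smul, innerSL_apply_norm, abs_mul]

set_option synthInstance.maxHeartbeats 1000000 in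
lemma quadD2 (s : ℝ) (v x : E) :
    ‖iteratedFDeriv ℝ 2 (fun z : E => 1/4 * ‖z‖^2 - s * ‖v - z‖^2) x‖ ≤ |1/2 - 2*s| := by
  have e2 : ‖iteratedFDeriv ℝ 2 (fun z : E => 1/4 * ‖z‖^2 - s * ‖v - z‖^2) x‖
      = ‖iteratedFDeriv ℝ 1 (fderiv ℝ (fun z : E => 1/4 * ‖z‖^2 - s * ‖v - z‖^2)) x‖ :=
    (norm_iteratedFDeriv_fderiv (n := 1)).symm
  rw [e2, quadFDeriv]
  have e1 : ‖iteratedFDeriv ℝ 1 (fun x : E => (1/2 - 2*s) • innerSL ℝ x + (2*s) • innerSL ℝ v) x‖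
      = ‖iteratedFDeriv ℝ 0 (fderiv ℝ (fun x : E => (1/2 - 2*s) • innerSL ℝ x + (2*s) • innerSL ℝ v)) x‖ :=
    (norm_iteratedFDeriv_fderiv (n := 0)).symm
  rw [e1, norm_iteratedFDeriv_zero, quadFDeriv2]
  refine le_trans (ContinuousLinearMap.opNorm_smul_le _ _) ?_
  rw [Real.norm_eq_abs]
  exact mul_le_of_le_one_right (abs_nonneg _) (norm_innerSL_le ℝ)

set_option synthInstance.maxHeartbeats 1000000 in
lemma quadD3 (s : ℝ) (v x : E) :
    ‖iteratedFDeriv ℝ 3 (fun z : E => 1/4 * ‖z‖^2 - s * ‖v - z‖^2) x‖ = 0 := by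
  have e3 : ‖iteratedFDeriv ℝ 3 (fun z : E => 1/4 * ‖z‖^2 - s * ‖v - z‖^2) x‖
      = ‖iteratedFDeriv ℝ 2 (fderiv ℝ (fun z : E => 1/4 * ‖z‖^2 - s * ‖v - z‖^2)) x‖ :=
    (norm_iteratedFDeriv_fderiv (n := 2)).symm
  rw [e3, quadFDeriv]
  have e2 : ‖iteratedFDeriv ℝ 2 (fun x : E => (1/2 - 2*s) • innerSL ℝ x + (2*s) • innerSL ℝ v) x‖
      = ‖iteratedFDeriv ℝ 1 (fderiv ℝ (fun x : E => (1/2 - 2*s) • innerSL ℝ x + (2*s) • innerSL ℝ v)) x‖ :=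
    (norm_iteratedFDeriv_fderiv (n := 1)).symm
  rw [e2, quadFDeriv2]
  rw [iteratedFDeriv_const_of_ne (by norm_num : (1:ℕ) ≠ 0)]
  simp

end Aux

/-- Mehler's formula: the integral kernel of `e^{tL}` where `L = Δ - (y/2)·∇ + 1`. -/
noncomputable def mehlerKernel (N : ℕ) (t : ℝ) (y x : EuclideanSpace ℝ (Fin N)) : ℝ :=
  Real.exp t / (4 * Real.pi * (1 - Real.exp (-t))) ^ ((N : ℝ) / 2)
    * Real.exp (-‖(Real.exp (-t / 2)) • y - x‖ ^ 2 / (4 * (1 - Real.exp (-t))))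

/-- `G(y,x) = e^{|x|²/4} e^{(s-σ)L}(y,x)`. -/
noncomputable def Gkernel (N : ℕ) (s σ : ℝ) (y x : EuclideanSpace ℝ (Fin N)) : ℝ :=
  Real.exp (‖x‖ ^ 2 / 4) * mehlerKernel N (s - σ) y x

set_option maxHeartbeats 1000000 in
set_option synthInstance.maxHeartbeats 1000000 in
theorem stmt15 {N : ℕ} (hN : 1 ≤ N) (m : ℕ) (hm : m ≤ 3) :
    ∃ C : ℝ, 0 < C ∧ ∀ (s σ : ℝ), 1 ≤ s - σ → ∀ y x : EuclideanSpace ℝ (Fin N),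
      ‖iteratedFDeriv ℝ m (fun x' => Gkernel N s σ y x') x‖ ≤
        C * Real.exp (-(m : ℝ) * (s - σ) / 2) * (1 + ‖x‖ + ‖y‖) ^ m
          * Real.exp (‖x‖ ^ 2 / 4) * mehlerKernel N (s - σ) y x := by
  have hc1pos : (0:ℝ) < 1 - Real.exp (-1) := by
    have h : Real.exp (-1 : ℝ) < 1 := Real.exp_lt_one_iff.mpr (by norm_num)
    linarith
  set c1 : ℝ := (1 - Real.exp (-1))⁻¹ with hc1def
  have hc1 : 1 ≤ c1 := by
    rw [hc1def]
    rw [le_inv_comm₀ one_pos hc1pos]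
    simp
    linarith [Real.exp_pos (-1 : ℝ)]
  have hc1pos' : (0:ℝ) < c1 := lt_of_lt_of_le one_pos hc1
  refine ⟨6 * c1 ^ 3, by positivity, ?_⟩
  intro s σ hs y x
  set t := s - σ with ht
  set ε := Real.exp (-t / 2) with hεdef
  set b := 1 - Real.exp (-t) with hbdef
  have hεpos : 0 < ε := Real.exp_pos _
  have hε1 : ε ≤ 1 := Real.exp_le_one_iff.mpr (by linarith)
  have hεsq : Real.exp (-t) = ε ^ 2 := by
    rw [hεdef, sq, ← Real.exp_add]; ring_nf
  have h1t : Real.exp (-t) ≤ Real.exp (-1 : ℝ) := Real.exp_le_exp.2 (by linarith)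
  have hb0 : 0 < b := by rw [hbdef]; linarith
  have hbc : b⁻¹ ≤ c1 := by
    rw [hc1def]
    apply inv_anti₀ hc1pos
    rw [hbdef]; linarith
  set K : ℝ := Real.exp t / (4 * Real.pi * b) ^ ((N : ℝ) / 2) with hKdef
  have hK : 0 < K := by
    apply div_pos (Real.exp_pos _)
    apply Real.rpow_pos_of_pos
    have := Real.pi_pos
    positivity
  set q : EuclideanSpace ℝ (Fin N) → ℝ := fun z => 1/4 * ‖z‖^2 - (1/(4*b)) * ‖ε • y - z‖^2 with hqdef
  have hG : ∀ x' : EuclideanSpace ℝ (Fin N), Real.exp (‖x'‖^2/4) * mehlerKernel N t y x' = K * Real.exp (q x') := by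
    intro x'
    simp only [mehlerKernel]
    rw [← hbdef, ← hεdef, ← hKdef]
    rw [show q x' = ‖x'‖^2/4 + (-‖ε • y - x'‖^2 / (4*b)) from by rw [hqdef]; ring]
    rw [Real.exp_add]
    ring
  have hqc : ContDiff ℝ ⊤ q := by rw [hqdef]; exact quadContDiff _ _
  have hcomp : (fun x' : EuclideanSpace ℝ (Fin N) => Gkernel N s σ y x') = K • (Real.exp ∘ q) := by
    funext x'
    simp only [Gkernel, ← ht, Pi.smul_apply, Function.comp_apply, smul_eq_mul]
    rw [show ‖x'‖^2/4 = ‖x'‖^2/4 from rfl] -- no-op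
    exact hG x'
  set X : ℝ := 1 + ‖x‖ + ‖y‖ with hXdef
  have hX : (1:ℝ) ≤ X := by rw [hXdef]; linarith [norm_nonneg x, norm_nonneg y]
  set D : ℝ := c1 * ε * X with hDdef
  have hD0 : 0 ≤ D := by rw [hDdef]; positivity
  -- coefficient bounds
  have habs1 : |1/2 - 2*(1/(4*b))| ≤ c1 * ε^2 / 2 := by
    have e : 1/2 - 2*(1/(4*b)) = -(Real.exp (-t)/(2*b)) := by
      have h1b : Real.exp (-t) = 1 - b := by rw [hbdef]; ring
      rw [h1b]
      field_simp
      ring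
    rw [e, abs_neg, abs_of_nonneg (by positivity)]
    rw [hεsq, ← div_div, div_eq_mul_inv (ε^2/2) b]
    calc ε^2/2 * b⁻¹ ≤ ε^2/2 * c1 := by
          exact mul_le_mul_of_nonneg_left hbc (by positivity)
      _ = c1 * ε^2 / 2 := by ring
  have habs2 : |2*(1/(4*b))| ≤ c1 / 2 := by
    rw [abs_of_pos (by positivity)]
    rw [show 2*(1/(4*b)) = b⁻¹ / 2 from by field_simp; ring]
    linarith
  have hCexp : ∀ i, i ≤ m → ‖iteratedFDeriv ℝ i Real.exp (q x)‖ ≤ Real.exp (q x) := by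
    intro i _
    rw [norm_iteratedFDeriv_eq_norm_iteratedDeriv, iteratedDeriv_eq_iterate,
      Real.iter_deriv_exp, Real.norm_eq_abs, abs_of_pos (Real.exp_pos _)]
  have hDq : ∀ i, 1 ≤ i → i ≤ m → ‖iteratedFDeriv ℝ i q x‖ ≤ D ^ i := by
    intro i hi1 hi2
    have hi3 : i ≤ 3 := hi2.trans hm
    interval_cases i
    · -- i = 1
      rw [hqdef, pow_one]
      refine le_trans (quadD1 _ _ _) ?_
      have hv : ‖ε • y‖ = ε * ‖y‖ := by
        rw [norm_smul, Real.norm_eq_abs, abs_of_pos hεpos]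
      rw [hv, hDdef, hXdef]
      have t1 : |1/2 - 2*(1/(4*b))| * ‖x‖ ≤ c1 * ε^2/2 * ‖x‖ :=
        mul_le_mul_of_nonneg_right habs1 (norm_nonneg _)
      have t2 : |2*(1/(4*b))| * (ε * ‖y‖) ≤ c1/2 * (ε * ‖y‖) :=
        mul_le_mul_of_nonneg_right habs2 (by positivity)
      have t3 : c1 * ε^2/2 * ‖x‖ ≤ c1 * ε/2 * ‖x‖ := by
        have : c1 * ε^2 ≤ c1 * ε := by nlinarith
        nlinarith [norm_nonneg x]
      nlinarith [norm_nonneg x, norm_nonneg y, mul_pos hc1pos' hεpos]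
    · -- i = 2
      rw [hqdef]
      refine le_trans (quadD2 _ _ _) ?_
      refine le_trans habs1 ?_
      have : D^2 = c1^2 * ε^2 * X^2 := by rw [hDdef]; ring
      rw [this]
      calc c1 * ε^2 / 2 ≤ c1 * ε^2 := by nlinarith [sq_nonneg ε, hc1pos']
        _ ≤ (c1 * ε^2) * (c1 * X^2) :=
          le_mul_of_one_le_right (by positivity) (by nlinarith [hX, hc1])
        _ = c1^2 * ε^2 * X^2 := by ring
    · -- i = 3
      rw [hqdef]
      rw [quadD3]
      positivity
  have key := norm_iteratedFDeriv_comp_le (𝕜 := ℝ) (g := Real.exp) (f := q) (n := m)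
    (N := ⊤) Real.contDiff_exp hqc le_top x hCexp hDq
  rw [hcomp, iteratedFDeriv_const_smul_apply ((Real.contDiff_exp.comp hqc).of_le le_top).contDiffAt,
    norm_smul, Real.norm_eq_abs, abs_of_pos hK]
  have hεm : ε ^ m = Real.exp (-(m : ℝ) * t / 2) := by
    rw [show (-(m:ℝ) * t / 2) = (m:ℝ) * (-t/2) from by ring, Real.exp_nat_mul, hεdef]
  have hDm : D ^ m = c1^m * Real.exp (-(m : ℝ) * t / 2) * X^m := by
    rw [hDdef, mul_pow, mul_pow, hεm]
  have hfac : (m.factorial : ℝ) ≤ 6 := by interval_cases m <;> norm_num [Nat.factorial]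
  have hc1m : c1 ^ m ≤ c1 ^ 3 := pow_le_pow_right₀ hc1 hm
  calc K * ‖iteratedFDeriv ℝ m (Real.exp ∘ q) x‖
      ≤ K * ((m.factorial : ℝ) * Real.exp (q x) * D ^ m) :=
        mul_le_mul_of_nonneg_left key hK.le
    _ = ((m.factorial : ℝ) * c1^m) * (Real.exp (-(m : ℝ) * t / 2) * X^m * (K * Real.exp (q x))) := by
        rw [hDm]; ring
    _ ≤ (6 * c1^3) * (Real.exp (-(m : ℝ) * t / 2) * X^m * (K * Real.exp (q x))) := by
        refine mul_le_mul_of_nonneg_right ?_ (by positivity)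
        exact mul_le_mul hfac hc1m (by positivity) (by norm_num)
    _ = 6 * c1^3 * Real.exp (-(m : ℝ) * t / 2) * (1 + ‖x‖ + ‖y‖)^m
          * Real.exp (‖x‖^2/4) * mehlerKernel N t y x := by
        rw [← hG x, hXdef]; ring
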